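/- Let A and B be categories, let s, t : A ⥤ B be functors, and let α, β : s ⟶ t be natural transformations. Form the sum category A ⊕ B, the copair functors σ = [s, 𝟭 B] and τ = [t, 𝟭 B] : A ⊕ B ⥤ B (restricting to s respectively t on the left summand and to the identity on the right summand), the copaired natural transformations ᾱ, β̄ : σ ⟶ τ (with component α_a respectively β_a at a left object inl(a) and the identity at a right object inr(b)), and the right inclusion functor i : B ⥤ A ⊕ B. Then: (i) i ⋙ σ = i ⋙ τ = 𝟭 B and the whiskerings whiskerLeft i ᾱ and whiskerLeft i β̄ are the identity transformation (modulo these equalities of functors), so the copaired pair is reflexive; and (ii) for every category D and every functor f : B ⥤ D, whiskerRight α f = whiskerRight β f if and only if whiskerRight ᾱ f = whiskerRight β̄ f; consequently a functor coequifies (α, β) exactly when it coequifies (ᾱ, β̄). -/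

import Mathlib

open CategoryTheory

universe v u v' u'

namespace BirkhoffStmt10

variable {A : Type u} [Category.{v} A] {B : Type u} [Category.{v} B]

/-- The copaired natural transformation `[α, 1] : [s, 𝟭 B] ⟶ [t, 𝟭 B]`, with component
`α.app a` at a left object `inl a` and the identity at a right object `inr b`. -/
def copair {s t : A ⥤ B} (α : s ⟶ t) : s.sum' (𝟭 B) ⟶ t.sum' (𝟭 B) where
  app X :=
    match X with
    | Sum.inl a => α.app a
    | Sum.inr b => 𝟙 b
  naturality X Y f :=
    match X, Y, f with
    | Sum.inl _, Sum.inl _, f => α.naturality f.down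
    | Sum.inr _, Sum.inr _, f => by
        change f.down ≫ 𝟙 _ = 𝟙 _ ≫ f.down
        simp

/-- A coequifier of a pair of 2-cells `(α, β)` is a coequifier of the associated reflexive
pair `([α, 1], [β, 1])` on the sum category: (i) the copaired pair is reflexive, i.e.
composing with the right inclusion `i : B ⥤ A ⊕ B` gives the identity functor, and
whiskering the copaired 2-cells with `i` gives identity 2-cells (modulo `eqToHom` of
these equalities of functors); (ii) a functor `f` coequifies `(α, β)` if and only if it
coequifies `([α, 1], [β, 1])`. -/
theorem copair_reflexive_and_coequify_iff
    (s t : A ⥤ B) (α β : s ⟶ t) :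
    (Sum.inr_ A B ⋙ s.sum' (𝟭 B) = 𝟭 B) ∧
    (Sum.inr_ A B ⋙ t.sum' (𝟭 B) = 𝟭 B) ∧
    (∀ (e₁ : Sum.inr_ A B ⋙ s.sum' (𝟭 B) = 𝟭 B) (e₂ : Sum.inr_ A B ⋙ t.sum' (𝟭 B) = 𝟭 B),
      CategoryTheory.Functor.whiskerLeft (Sum.inr_ A B) (copair α) = eqToHom (e₁.trans e₂.symm) ∧
      CategoryTheory.Functor.whiskerLeft (Sum.inr_ A B) (copair β) = eqToHom (e₁.trans e₂.symm)) ∧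
    (∀ (D : Type u') [Category.{v'} D] (f : B ⥤ D),
      (CategoryTheory.Functor.whiskerRight α f = CategoryTheory.Functor.whiskerRight β f ↔
        CategoryTheory.Functor.whiskerRight (copair α) f = CategoryTheory.Functor.whiskerRight (copair β) f)) := by
  have e : ∀ (u : A ⥤ B), Sum.inr_ A B ⋙ u.sum' (𝟭 B) = 𝟭 B := by
    intro u
    exact CategoryTheory.Functor.ext (fun X => rfl) (fun X Y f => by simp [Functor.sum']; erw [Category.id_comp, Category.comp_id]; rfl)
  refine ⟨e s, e t, ?_, ?_⟩
  · intro e₁ e₂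
    constructor <;>
    · ext b
      simp [copair, eqToHom_app]
      rfl
  · intro D _ f
    constructor
    · intro h
      ext X
      match X with
      | Sum.inl a =>
        have := congrArg (fun n => n.app a) h
        simpa [copair] using this
      | Sum.inr b => rfl
    · intro h
      ext a
      have := congrArg (fun n => n.app (Sum.inl a : A ⊕ B)) h
      simpa [copair] using this

end BirkhoffStmt10
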